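/- The discretized information gain objective is asymptotically consistent: if Ω is a set of M i.i.d. samples from the belief b, then (1/M) ∑_{q∈Q} ∑_{ω̄∈Ω} P(q|Q,ω̄) · log₂( M·P(q|Q,ω̄) / ∑_{ω'∈Ω} P(q|Q,ω') ) converges almost surely as M → ∞ to the mutual information I(ω; q | Q, b) = E_{ω,q}[ log₂( P(q|Q,ω) / E_{ω'}[P(q|Q,ω')] ) ]. -/

import Mathlib

open MeasureTheory ProbabilityTheory Filter Topology

/-- consistency of the discretized information gain objective.
Let `b` be a probability mass function on a finite parameter set `Θ`, let
`P q w ∈ (0,1)` be the response model for a finite query `Q`, and let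
`X 0, X 1, …` be i.i.d. samples from `b` (defined on a probability space
`(Ω, μ)`). Then the sample-based information gain
`(1/M) ∑_{q ∈ Q} ∑_{ω̄ ∈ Ω_M} P(q|ω̄) log₂( M·P(q|ω̄) / ∑_{ω' ∈ Ω_M} P(q|ω') )`
(with `Ω_M = {X 0, …, X (M−1)}`) converges almost surely as `M → ∞` to the
mutual information
`I(ω; q | Q, b) = ∑_w b w ∑_q P(q|w) log₂( P(q|w) / ∑_{w'} b w' P(q|w') )`. -/
theorem discretized_information_gain_consistent
    {Θ : Type*} [Fintype Θ] [MeasurableSpace Θ] [MeasurableSingletonClass Θ]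
    {Q : Type*} [Fintype Q]
    {Ω : Type*} [MeasurableSpace Ω] (μ : Measure Ω) [IsProbabilityMeasure μ]
    (b : Θ → ℝ) (hb0 : ∀ w, 0 < b w) (hb1 : ∑ w, b w = 1)
    (P : Q → Θ → ℝ) (hP : ∀ q w, P q w ∈ Set.Ioo (0 : ℝ) 1)
    (X : ℕ → Ω → Θ) (hmeas : ∀ i, Measurable (X i))
    (hindep : iIndepFun X μ)
    (hlaw : ∀ i w, μ (X i ⁻¹' {w}) = ENNReal.ofReal (b w)) :
    ∀ᵐ ω ∂μ, Tendsto
      (fun M : ℕ =>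
        (1 / (M : ℝ)) * ∑ q : Q, ∑ i ∈ Finset.range M,
          P q (X i ω) *
            Real.logb 2 ((M : ℝ) * P q (X i ω)
              / ∑ j ∈ Finset.range M, P q (X j ω)))
      atTop
      (nhds (∑ w, b w * ∑ q, P q w *
        Real.logb 2 (P q w / ∑ w', b w' * P q w'))) := by
  classical
  -- Θ is nonempty
  have hne : Nonempty Θ := by
    by_contra h
    rw [not_nonempty_iff] at h
    simp [Finset.univ_eq_empty] at hb1
  -- the maps all have the same law
  have hmap : ∀ i, Measure.map (X i) μ = Measure.map (X 0) μ := by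
    intro i
    refine Measure.ext_of_singleton fun a => ?_
    rw [Measure.map_apply (hmeas i) (measurableSet_singleton a),
      Measure.map_apply (hmeas 0) (measurableSet_singleton a), hlaw, hlaw]
  have hident : ∀ i, IdentDistrib (X i) (X 0) μ μ :=
    fun i => ⟨(hmeas i).aemeasurable, (hmeas 0).aemeasurable, hmap i⟩
  -- SLLN for any function of the samples
  have key : ∀ g : Θ → ℝ, ∀ᵐ ω ∂μ, Tendsto
      (fun M : ℕ => (1 / (M : ℝ)) * ∑ i ∈ Finset.range M, g (X i ω)) atTop
      (𝓝 (∑ w, b w * g w)) := by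
    intro g
    have hg : Measurable g := measurable_of_countable g
    set Y : ℕ → Ω → ℝ := fun i ω => g (X i ω) with hY
    have hint : Integrable (Y 0) μ := by
      have : Integrable g (Measure.map (X 0) μ) := by
        have : IsProbabilityMeasure (Measure.map (X 0) μ) :=
          Measure.isProbabilityMeasure_map (hmeas 0).aemeasurable
        exact .of_finite
      exact (integrable_map_measure hg.aestronglyMeasurable
        (hmeas 0).aemeasurable).mp this
    have hYindep : Pairwise (Function.onFun (IndepFun · · μ) Y) := by
      intro i j hij
      exact (hindep.indepFun hij).comp hg hg
    have hYident : ∀ i, IdentDistrib (Y i) (Y 0) μ μ := fun i => (hident i).comp hg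
    have hE : μ[Y 0] = ∑ w, b w * g w := by
      have h1 : μ[Y 0] = ∫ x, g x ∂(Measure.map (X 0) μ) :=
        (integral_map (hmeas 0).aemeasurable hg.aestronglyMeasurable).symm
      have h2 : Integrable g (Measure.map (X 0) μ) := by
        have : IsProbabilityMeasure (Measure.map (X 0) μ) :=
          Measure.isProbabilityMeasure_map (hmeas 0).aemeasurable
        exact .of_finite
      rw [h1, integral_fintype h2]
      refine Finset.sum_congr rfl fun w _ => ?_
      rw [Measure.real, Measure.map_apply (hmeas 0) (measurableSet_singleton w), hlaw,
        ENNReal.toReal_ofReal (hb0 w).le]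
      simp [mul_comm]
    have := strong_law_ae Y hint hYindep hYident
    filter_upwards [this] with ω hω
    rw [hE] at hω
    convert hω using 2 with M
    simp [smul_eq_mul, one_div, hY]
  -- apply it to the two relevant families of functions
  have keyA : ∀ᵐ ω ∂μ, ∀ q : Q, Tendsto
      (fun M : ℕ => (1 / (M : ℝ)) * ∑ i ∈ Finset.range M, P q (X i ω)) atTop
      (𝓝 (∑ w, b w * P q w)) := by
    rw [ae_all_iff]; exact fun q => key (P q)
  have keyB : ∀ᵐ ω ∂μ, ∀ q : Q, Tendsto
      (fun M : ℕ => (1 / (M : ℝ)) * ∑ i ∈ Finset.range M,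
        P q (X i ω) * Real.logb 2 (P q (X i ω))) atTop
      (𝓝 (∑ w, b w * (P q w * Real.logb 2 (P q w)))) := by
    rw [ae_all_iff]; exact fun q => key (fun w => P q w * Real.logb 2 (P q w))
  filter_upwards [keyA, keyB] with ω hA hB
  set S : Q → ℝ := fun q => ∑ w, b w * P q w with hSdef
  have hSpos : ∀ q, 0 < S q := fun q =>
    Finset.sum_pos (fun w _ => mul_pos (hb0 w) (hP q w).1) Finset.univ_nonempty
  set T : Q → ℝ := fun q => ∑ w, b w * (P q w * Real.logb 2 (P q w)) with hTdef
  -- rewrite the limit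
  have hlim : (∑ w, b w * ∑ q, P q w * Real.logb 2 (P q w / ∑ w', b w' * P q w'))
      = ∑ q, (T q - S q * Real.logb 2 (S q)) := by
    simp only [Finset.mul_sum]
    rw [Finset.sum_comm]
    refine Finset.sum_congr rfl fun q _ => ?_
    have : ∀ w : Θ, b w * (P q w * Real.logb 2 (P q w / S q))
        = b w * (P q w * Real.logb 2 (P q w)) - (b w * P q w) * Real.logb 2 (S q) := by
      intro w
      rw [Real.logb_div (ne_of_gt (hP q w).1) (ne_of_gt (hSpos q))]
      ring
    simp only [hSdef, hTdef] at this ⊢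
    simp only [this, Finset.sum_sub_distrib, ← Finset.sum_mul]
  rw [hlim]
  -- the limit of the transformed expression
  have hF : Tendsto (fun M : ℕ => ∑ q : Q,
      ((1 / (M : ℝ)) * ∑ i ∈ Finset.range M,
          P q (X i ω) * Real.logb 2 (P q (X i ω)) -
        ((1 / (M : ℝ)) * ∑ i ∈ Finset.range M, P q (X i ω)) *
          Real.logb 2 ((1 / (M : ℝ)) * ∑ i ∈ Finset.range M, P q (X i ω))))
      atTop (𝓝 (∑ q, (T q - S q * Real.logb 2 (S q)))) := by
    refine tendsto_finset_sum _ fun q _ => (hB q).sub ((hA q).mul ?_)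
    have hlog : Tendsto (fun M : ℕ =>
        Real.log ((1 / (M : ℝ)) * ∑ i ∈ Finset.range M, P q (X i ω))) atTop
        (𝓝 (Real.log (S q))) := (hA q).log (ne_of_gt (hSpos q))
    simpa [Real.logb] using hlog.div_const (Real.log 2)
  refine hF.congr' ?_
  filter_upwards [eventually_ge_atTop 1] with M hM
  have hM0 : (M : ℝ) ≠ 0 := by positivity
  rw [Finset.mul_sum]
  refine Finset.sum_congr rfl fun q _ => ?_
  set s : ℝ := ∑ j ∈ Finset.range M, P q (X j ω) with hs
  have hspos : 0 < s :=
    Finset.sum_pos (fun j _ => (hP q (X j ω)).1)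
      (Finset.nonempty_range_iff.mpr (by omega))
  have hApos : 0 < (1 / (M : ℝ)) * s := by positivity
  have hterm : ∀ i ∈ Finset.range M,
      P q (X i ω) * Real.logb 2 ((M : ℝ) * P q (X i ω) / s)
      = P q (X i ω) * Real.logb 2 (P q (X i ω))
        - P q (X i ω) * Real.logb 2 ((1 / (M : ℝ)) * s) := by
    intro i _
    have h1 : (M : ℝ) * P q (X i ω) / s = P q (X i ω) / ((1 / (M : ℝ)) * s) := by
      field_simp
    rw [h1, Real.logb_div (ne_of_gt (hP q (X i ω)).1) (ne_of_gt hApos)]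
    ring
  rw [Finset.sum_congr rfl hterm, Finset.sum_sub_distrib, mul_sub, ← Finset.sum_mul,
    ← hs]
  ring
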